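/- Let z be a positive solution of ż = c g(u) − f(u) − h(u)/z^α on (0,1) with z(0⁺) = 0, and assume the limit h_{α,0} := lim_{u→0⁺} h(u)/u^α exists in [0,+∞]. Then h_{α,0} < +∞, the limit λ := lim_{u→0⁺} z(u)/u exists and is finite, and λ satisfies λ^(α+1) − (c g(0) − f(0))·λ^α + h_{α,0} = 0. -/

import Mathlib

open Set Filter Topology Real

lemma monoOn_Ioo (F D : ℝ → ℝ) {a b : ℝ}
    (hF : ∀ s ∈ Ioo a b, HasDerivAt F (D s) s)
    (hD : ∀ s ∈ Ioo a b, 0 ≤ D s) : MonotoneOn F (Ioo a b) := by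
  apply monotoneOn_of_deriv_nonneg (convex_Ioo a b)
  · exact fun x hx => (hF x hx).continuousAt.continuousWithinAt
  · rw [interior_Ioo]
    exact fun x hx => (hF x hx).differentiableAt.differentiableWithinAt
  · rw [interior_Ioo]
    intro x hx
    rw [(hF x hx).deriv]
    exact hD x hx

lemma slope_le (z D : ℝ → ℝ) {δ K : ℝ}
    (hz : ∀ s ∈ Ioo (0:ℝ) δ, HasDerivAt z (D s) s)
    (hD : ∀ s ∈ Ioo (0:ℝ) δ, D s ≤ K)
    (hz0 : Tendsto z (𝓝[>] (0:ℝ)) (𝓝 0)) :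
    ∀ u ∈ Ioo (0:ℝ) δ, z u ≤ K * u := by
  intro u hu
  have mono : MonotoneOn (fun s => K * s - z s) (Ioo 0 δ) :=
    monoOn_Ioo _ (fun s => K - D s)
      (fun s hs => by
        have h' : HasDerivAt (fun y => K * y - z y) (K * 1 - D s) s := ((hasDerivAt_id s).const_mul K).sub (hz s hs)
        simpa using h')
      (fun s hs => sub_nonneg.2 (hD s hs))
  have h1 : ∀ᶠ v in 𝓝[>] (0:ℝ), K * v - z v ≤ K * u - z u := by
    filter_upwards [Ioo_mem_nhdsGT_of_mem ⟨le_refl (0:ℝ), hu.1⟩] with v hv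
    exact mono ⟨hv.1, hv.2.trans hu.2⟩ hu (le_of_lt hv.2)
  have h2 : Tendsto (fun v => K * v - z v) (𝓝[>] (0:ℝ)) (𝓝 0) := by
    have : Tendsto (fun v : ℝ => K * v) (𝓝[>] (0:ℝ)) (𝓝 0) := by
      have h3 : Tendsto (fun v : ℝ => K * v) (𝓝 (0:ℝ)) (𝓝 (K * 0)) :=
        (continuous_const.mul continuous_id).tendsto (0:ℝ)
      rw [mul_zero] at h3
      exact h3.mono_left nhdsWithin_le_nhds
    simpa using this.sub hz0
  have := le_of_tendsto h2 h1
  linarith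

lemma no_up_crossing (φ Dφ : ℝ → ℝ) {t δ ε : ℝ} (hδ : 0 < δ) (hε : 0 < ε)
    (hderiv : ∀ u ∈ Ioo (0:ℝ) δ, HasDerivAt φ (Dφ u) u)
    (hsign : ∀ u ∈ Ioo (0:ℝ) δ, |φ u - t| ≤ ε → Dφ u < 0)
    (hfreq_lt : ∃ᶠ u in 𝓝[>] (0:ℝ), φ u < t)
    (hfreq_gt : ∃ᶠ u in 𝓝[>] (0:ℝ), φ u > t) : False := by
  obtain ⟨b, hbgt, hbmem⟩ := (hfreq_gt.and_eventually
    (Ioo_mem_nhdsGT_of_mem ⟨le_refl (0:ℝ), hδ⟩)).exists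
  obtain ⟨a, halt, hamem⟩ := (hfreq_lt.and_eventually
    (Ioo_mem_nhdsGT_of_mem ⟨le_refl (0:ℝ), hbmem.1⟩)).exists
  have hab : a < b := hamem.2
  have hsub : Icc a b ⊆ Ioo (0:ℝ) δ := fun x hx =>
    ⟨lt_of_lt_of_le hamem.1 hx.1, lt_of_le_of_lt hx.2 hbmem.2⟩
  have hcont : ContinuousOn φ (Icc a b) := fun x hx =>
    (hderiv x (hsub hx)).continuousAt.continuousWithinAt
  set S := {x ∈ Icc a b | φ x ≤ t} with hS
  have haS : a ∈ S := ⟨⟨le_refl a, hab.le⟩, halt.le⟩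
  have hSbdd : BddAbove S := (bddAbove_Icc (a := a) (b := b)).mono (fun x hx => hx.1)
  have hSclosed : IsClosed S := by
    have : S = Icc a b ∩ φ ⁻¹' Iic t := by ext x; simp [hS]
    rw [this]
    exact hcont.preimage_isClosed_of_isClosed isClosed_Icc isClosed_Iic
  set c := sSup S with hc
  have hcS : c ∈ S := hSclosed.csSup_mem ⟨a, haS⟩ hSbdd
  have hcb : c < b := by
    rcases lt_or_eq_of_le hcS.1.2 with hlt | heq
    · exact hlt
    · exact absurd (heq ▸ hcS.2) (not_le.2 hbgt)
  have hcIoo : c ∈ Ioo (0:ℝ) δ := hsub hcS.1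
  have hgt : ∀ x ∈ Ioc c b, t < φ x := by
    intro x hx
    by_contra hle
    push_neg at hle
    have hxS : x ∈ S := ⟨⟨hcS.1.1.trans hx.1.le, hx.2⟩, hle⟩
    exact absurd (le_csSup hSbdd hxS) (not_le.2 hx.1)
  have hφc : φ c = t := by
    rcases lt_or_eq_of_le hcS.2 with hlt | heq
    · exfalso
      have hcontc : ContinuousAt φ c := (hderiv c hcIoo).continuousAt
      have hev : ∀ᶠ x in 𝓝 c, φ x < t := hcontc.eventually_lt continuousAt_const hlt
      have hev' : ∀ᶠ x in 𝓝[>] c, φ x < t := hev.filter_mono nhdsWithin_le_nhds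
      obtain ⟨x, hx1, hx2⟩ := (hev'.and (Ioc_mem_nhdsGT_of_mem ⟨le_refl c, hcb⟩)).exists
      exact absurd (hgt x hx2) (not_lt.2 hx1.le)
    · exact heq
  have hslope : Tendsto (slope φ c) (𝓝[>] c) (𝓝 (Dφ c)) :=
    (hasDerivAt_iff_tendsto_slope.1 (hderiv c hcIoo)).mono_left
      (nhdsWithin_mono c (fun x hx => ne_of_gt hx))
  have hslope_nonneg : ∀ᶠ x in 𝓝[>] c, 0 ≤ slope φ c x := by
    filter_upwards [Ioc_mem_nhdsGT_of_mem ⟨le_refl c, hcb⟩] with x hx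
    have h1 : 0 < x - c := sub_pos.2 hx.1
    have h2 : 0 ≤ φ x - φ c := by rw [hφc]; linarith [hgt x hx]
    rw [slope_def_field]
    exact div_nonneg h2 h1.le
  have h0 : 0 ≤ Dφ c := ge_of_tendsto hslope hslope_nonneg
  have : Dφ c < 0 := hsign c hcIoo (by rw [hφc]; simpa using hε.le)
  linarith

lemma no_log_decay (φ Dφ : ℝ → ℝ) {δ ε C : ℝ} (hδ : 0 < δ) (hε : 0 < ε)
    (hd : ∀ u ∈ Ioo (0:ℝ) δ, HasDerivAt φ (Dφ u) u)
    (hD : ∀ u ∈ Ioo (0:ℝ) δ, Dφ u ≤ -ε / u)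
    (hbd : ∀ u ∈ Ioo (0:ℝ) δ, |φ u| ≤ C) : False := by
  have hmono : MonotoneOn (fun u => -φ u - ε * Real.log u) (Ioo 0 δ) := by
    apply monoOn_Ioo _ (fun u => -Dφ u - ε * u⁻¹)
    · intro s hs
      exact ((hd s hs).neg).sub ((Real.hasDerivAt_log (ne_of_gt hs.1)).const_mul ε)
    · intro s hs
      have := hD s hs
      have hs0 : 0 < s := hs.1
      rw [div_eq_mul_inv] at this
      nlinarith [this]
  set u := δ/2 with hu
  have huI : u ∈ Ioo (0:ℝ) δ := ⟨by positivity, by simp [hu]; linarith⟩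
  set v := min (δ/4) (Real.exp (Real.log u - (2*C+1)/ε)) with hv
  have hv0 : 0 < v := lt_min (by positivity) (Real.exp_pos _)
  have hvu : v < u := lt_of_le_of_lt (min_le_left _ _) (by rw [hu]; linarith)
  have hvI : v ∈ Ioo (0:ℝ) δ := ⟨hv0, hvu.trans huI.2⟩
  have hlogv : Real.log v ≤ Real.log u - (2*C+1)/ε := by
    calc Real.log v ≤ Real.log (Real.exp (Real.log u - (2*C+1)/ε)) :=
          Real.log_le_log hv0 (min_le_right _ _)
      _ = _ := Real.log_exp _
  have := hmono hvI huI hvu.le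
  have h1 : |φ u| ≤ C := hbd u huI
  have h2 : |φ v| ≤ C := hbd v hvI
  rw [abs_le] at h1 h2
  have h3 : ε * (Real.log u - Real.log v) ≥ ε * ((2*C+1)/ε) := by
    apply mul_le_mul_of_nonneg_left _ hε.le
    linarith
  rw [mul_div_cancel₀ _ (ne_of_gt hε)] at h3
  simp only at this
  nlinarith

set_option maxHeartbeats 2000000 in
theorem stmt_6 (α c : ℝ) (hα : 0 < α) (f g h : ℝ → ℝ)
    (hf : ContinuousOn f (Icc 0 1)) (hg : ContinuousOn g (Icc 0 1))
    (hh : ContinuousOn h (Icc 0 1))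
    (hh0 : h 0 = 0) (hh1 : h 1 = 0) (hhpos : ∀ u ∈ Ioo (0:ℝ) 1, 0 < h u)
    (z : ℝ → ℝ)
    (hz : ∀ u ∈ Ioo (0:ℝ) 1, HasDerivAt z (c * g u - f u - h u / z u ^ α) u)
    (hzpos : ∀ u ∈ Ioo (0:ℝ) 1, 0 < z u)
    (hz0 : Tendsto z (𝓝[>] (0:ℝ)) (𝓝 0))
    (hlim : (∃ l : ℝ, 0 ≤ l ∧ Tendsto (fun u => h u / u ^ α) (𝓝[>] (0:ℝ)) (𝓝 l)) ∨
      Tendsto (fun u => h u / u ^ α) (𝓝[>] (0:ℝ)) atTop) :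
    ∃ l lam : ℝ, 0 ≤ l ∧
      Tendsto (fun u => h u / u ^ α) (𝓝[>] (0:ℝ)) (𝓝 l) ∧
      0 ≤ lam ∧
      Tendsto (fun u => z u / u) (𝓝[>] (0:ℝ)) (𝓝 lam) ∧
      lam ^ (α + 1) - (c * g 0 - f 0) * lam ^ α + l = 0 := by
  set F := 𝓝[>] (0:ℝ) with hF
  set b0 := c * g 0 - f 0 with hb0def
  set bfun : ℝ → ℝ := fun u => c * g u - f u with hbfun
  set q : ℝ → ℝ := fun u => h u / u ^ α with hqdef
  set φ : ℝ → ℝ := fun u => z u / u with hφdef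
  set Dz : ℝ → ℝ := fun u => c * g u - f u - h u / z u ^ α with hDzdef
  set Dφ : ℝ → ℝ := fun u => (Dz u * u - z u) / u ^ 2 with hDφdef
  clear_value b0 bfun q φ Dz Dφ
  have hIoo1 : Ioo (0:ℝ) 1 ∈ F := Ioo_mem_nhdsGT_of_mem ⟨le_refl (0:ℝ), one_pos⟩
  have hFle : F ≤ 𝓝[Icc (0:ℝ) 1] (0:ℝ) := by
    rw [hF, ← nhdsWithin_Ioo_eq_nhdsGT one_pos]
    exact nhdsWithin_mono 0 Ioo_subset_Icc_self
  have hbt : Tendsto bfun F (𝓝 b0) := by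
    have hgc : Tendsto g (𝓝[Icc (0:ℝ) 1] 0) (𝓝 (g 0)) := hg 0 (left_mem_Icc.2 zero_le_one)
    have hfc : Tendsto f (𝓝[Icc (0:ℝ) 1] 0) (𝓝 (f 0)) := hf 0 (left_mem_Icc.2 zero_le_one)
    rw [hbfun, hb0def]
    exact ((tendsto_const_nhds.mul hgc).sub hfc).mono_left hFle
  -- upper slope bound
  have hupper : ∀ ε : ℝ, 0 < ε → ∀ᶠ u in F, z u ≤ (b0 + ε) * u := by
    intro ε hε
    have hev : ∀ᶠ u in F, bfun u < b0 + ε ∧ u ∈ Ioo (0:ℝ) 1 := by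
      have h1 : ∀ᶠ u in F, bfun u < b0 + ε :=
        hbt.eventually (Filter.Tendsto.eventually_lt_const (by linarith) tendsto_id)
      exact h1.and hIoo1
    obtain ⟨δ, hδpos, hδsub⟩ := mem_nhdsGT_iff_exists_Ioo_subset.1 hev
    have hsl := slope_le z Dz (K := b0 + ε) (δ := δ)
      (fun s hs => by rw [hDzdef]; exact hz s (hδsub hs).2)
      (fun s hs => by
        have h2 := (hδsub hs).1
        have h3 := (hδsub hs).2
        have h4 : 0 < h s / z s ^ α :=
          div_pos (hhpos s h3) (Real.rpow_pos_of_pos (hzpos s h3) α)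
        rw [hDzdef]
        simp only [hbfun] at h2
        linarith)
      hz0
    filter_upwards [Ioo_mem_nhdsGT_of_mem ⟨le_refl (0:ℝ), hδpos⟩] with u hu
    exact hsl u hu
  have hb0 : 0 ≤ b0 := by
    by_contra hneg
    push_neg at hneg
    obtain ⟨u, h1, h2⟩ := ((hupper (-b0/2) (by linarith)).and hIoo1).exists
    have := hzpos u h2
    nlinarith [h2.1]
  have hφpos : ∀ᶠ u in F, 0 < φ u := by
    filter_upwards [hIoo1] with u hu
    rw [hφdef]
    exact div_pos (hzpos u hu) hu.1
  have hφle : ∀ ε : ℝ, 0 < ε → ∀ᶠ u in F, φ u ≤ b0 + ε := by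
    intro ε hε
    filter_upwards [hupper ε hε, self_mem_nhdsWithin] with u h1 (h2 : (0:ℝ) < u)
    rw [hφdef]
    exact (div_le_iff₀ h2).2 (by linarith [h1])
  -- blowup of h/z^α is impossible
  have hblowup : Tendsto (fun u => h u / z u ^ α) F atTop → False := by
    intro hT
    have hev : ∀ᶠ u in F, Dz u ≤ -1 ∧ u ∈ Ioo (0:ℝ) 1 := by
      have h1 : ∀ᶠ u in F, bfun u < b0 + 1 :=
        hbt.eventually (Filter.Tendsto.eventually_lt_const (by linarith) tendsto_id)
      have h2 := hT.eventually_ge_atTop (b0 + 2)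
      filter_upwards [h1, h2, hIoo1] with u hu1 hu2 hu3
      refine ⟨?_, hu3⟩
      rw [hDzdef]
      simp only [hbfun] at hu1
      linarith
    obtain ⟨δ, hδpos, hδsub⟩ := mem_nhdsGT_iff_exists_Ioo_subset.1 hev
    have hsl := slope_le z Dz (K := -1) (δ := δ)
      (fun s hs => by rw [hDzdef]; exact hz s (hδsub hs).2) (fun s hs => (hδsub hs).1) hz0
    have hδ0 : (0:ℝ) < δ := hδpos
    have hu : δ/2 ∈ Ioo (0:ℝ) δ := ⟨by positivity, by linarith⟩
    have h5 := hsl (δ/2) hu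
    have h6 := hzpos (δ/2) (hδsub hu).2
    nlinarith [(hδsub hu).2.1]
  -- ratio identity
  have hratio : ∀ u ∈ Ioo (0:ℝ) 1, h u / z u ^ α = q u / φ u ^ α := by
    intro u hu
    have hu0 : 0 < u := hu.1
    have hzu : 0 < z u := hzpos u hu
    have huα : (0:ℝ) < u ^ α := Real.rpow_pos_of_pos hu0 α
    have hzα : (0:ℝ) < z u ^ α := Real.rpow_pos_of_pos hzu α
    have hφα : φ u ^ α = z u ^ α / u ^ α := by
      rw [hφdef]; exact Real.div_rpow hzu.le hu0.le α
    rw [hqdef, hφα]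
    simp only
    field_simp
  -- obtain the finite limit l
  obtain ⟨l, hl0, hql⟩ : ∃ l : ℝ, 0 ≤ l ∧ Tendsto q F (𝓝 l) := by
    rcases hlim with ⟨l, hl0, hql⟩ | hT
    · exact ⟨l, hl0, hql⟩
    · exfalso
      apply hblowup
      have hB : (0:ℝ) < b0 + 1 := by linarith
      have hBα : (0:ℝ) < (b0 + 1) ^ α := Real.rpow_pos_of_pos hB α
      have h1 : Tendsto (fun u => q u / (b0 + 1) ^ α) F atTop := hT.atTop_div_const hBα
      apply tendsto_atTop_mono' F _ h1
      filter_upwards [hIoo1, hφle 1 one_pos, hφpos, hT.eventually_ge_atTop 0]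
        with u hu hle hpos hq0
      rw [hratio u hu]
      have hφα : (0:ℝ) < φ u ^ α := Real.rpow_pos_of_pos hpos α
      have hφαle : φ u ^ α ≤ (b0 + 1) ^ α := Real.rpow_le_rpow hpos.le hle hα.le
      exact div_le_div_of_nonneg_left hq0 hφα hφαle
  -- derivative of φ
  have hφder : ∀ u ∈ Ioo (0:ℝ) 1, HasDerivAt φ (Dφ u) u := by
    intro u hu
    have h1 := (hz u hu).div (hasDerivAt_id u) (ne_of_gt hu.1)
    have h2 : HasDerivAt φ ((Dz u * u - z u * 1) / u ^ 2) u := by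
      rw [hφdef, hDzdef]; have h1' : HasDerivAt (fun x => z x / x) _ u := h1
      simpa using h1'
    simpa [hDφdef] using h2
  have hφposIoo : ∀ u ∈ Ioo (0:ℝ) 1, 0 < φ u := fun u hu => by
    rw [hφdef]; exact div_pos (hzpos u hu) hu.1
  -- key algebraic identity
  have hkey_id : ∀ u ∈ Ioo (0:ℝ) 1,
      u * φ u ^ α * Dφ u = -(φ u ^ (α+1) - bfun u * φ u ^ α + q u) := by
    intro u hu
    have hu0 : 0 < u := hu.1
    have hφp : 0 < φ u := hφposIoo u hu
    have h1 : φ u ^ (α+1) = φ u ^ α * φ u := by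
      rw [Real.rpow_add hφp, Real.rpow_one]
    have h2 : h u / z u ^ α = q u / φ u ^ α := hratio u hu
    have hφαpos : (0:ℝ) < φ u ^ α := Real.rpow_pos_of_pos hφp α
    have h3 : Dz u = bfun u - q u / φ u ^ α := by
      rw [hDzdef, hbfun]; simp only; rw [← h2]
    rw [hDφdef]
    simp only
    rw [h3, h1]
    have hφu : φ u * u = z u := by rw [hφdef]; field_simp
    field_simp
    linear_combination φ u ^ α * hφu
  -- approximation of the sign expression near a positive level t
  have approx : ∀ t : ℝ, 0 < t → ∀ e : ℝ, 0 < e →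
      ∃ ε : ℝ, 0 < ε ∧ ∃ δ' : ℝ, 0 < δ' ∧ δ' ≤ 1 ∧ ∀ u ∈ Ioo (0:ℝ) δ', |φ u - t| ≤ ε →
        (u ∈ Ioo (0:ℝ) 1 ∧ 0 < φ u ∧ φ u ≤ 2*t ∧
          |u * φ u ^ α * Dφ u + (t ^ (α+1) - b0 * t ^ α + l)| ≤ e) := by
    intro t ht e he
    set Φ : ℝ → ℝ := fun s => s ^ (α+1) - b0 * s ^ α with hΦdef
    have hcontΦ : ContinuousAt Φ t := by
      have h1 := Real.continuousAt_rpow_const t (α+1) (Or.inl (ne_of_gt ht))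
      have h2 := Real.continuousAt_rpow_const t α (Or.inl (ne_of_gt ht))
      exact h1.sub (continuousAt_const.mul h2)
    obtain ⟨r, hr, hrΦ⟩ := Metric.continuousAt_iff.1 hcontΦ (e/3) (by positivity)
    set ε := min (r/2) (t/2) with hεdef
    have hεpos : 0 < ε := lt_min (by positivity) (by positivity)
    refine ⟨ε, hεpos, ?_⟩
    set C := (2*t) ^ α with hCdef
    have hCpos : (0:ℝ) < C := Real.rpow_pos_of_pos (by linarith) α
    set e3 : ℝ := e / (3 * C + 3) with he3def
    have he3pos : 0 < e3 := by positivity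
    have hevb : ∀ᶠ u in F, |bfun u - b0| < e3 := by
      have := Metric.tendsto_nhds.1 hbt e3 he3pos
      simpa [Real.dist_eq] using this
    have hevq : ∀ᶠ u in F, |q u - l| < e/3 := by
      have := Metric.tendsto_nhds.1 hql (e/3) (by positivity)
      simpa [Real.dist_eq] using this
    obtain ⟨δ'', hδ''pos, hδ''sub⟩ := mem_nhdsGT_iff_exists_Ioo_subset.1
      ((hevb.and hevq).and hIoo1)
    have hδ''pos' : (0:ℝ) < δ'' := hδ''pos
    refine ⟨min δ'' 1, lt_min hδ''pos' one_pos, min_le_right _ _, ?_⟩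
    intro u hu hband
    obtain ⟨⟨hub, huq⟩, hu1⟩ := hδ''sub ⟨hu.1, lt_of_lt_of_le hu.2 (min_le_left _ _)⟩
    have hφp : 0 < φ u := hφposIoo u hu1
    have hφle2t : φ u ≤ 2*t := by
      have h1 : |φ u - t| ≤ t/2 := hband.trans (min_le_right _ _)
      rw [abs_le] at h1
      linarith [h1.2]
    refine ⟨hu1, hφp, hφle2t, ?_⟩
    have hφαle : φ u ^ α ≤ C := by
      rw [hCdef]
      exact Real.rpow_le_rpow hφp.le hφle2t hα.le
    have hφαpos : (0:ℝ) < φ u ^ α := Real.rpow_pos_of_pos hφp α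
    have hΦclose : |Φ (φ u) - Φ t| < e/3 := by
      apply hrΦ
      rw [Real.dist_eq]
      exact lt_of_le_of_lt (hband.trans (min_le_left _ _)) (by linarith)
    have hsplit : u * φ u ^ α * Dφ u + (t ^ (α+1) - b0 * t ^ α + l) =
        (Φ t - Φ (φ u)) + (bfun u - b0) * φ u ^ α + (l - q u) := by
      rw [hkey_id u hu1, hΦdef]
      simp only
      ring
    rw [hsplit]
    have t1 : |Φ t - Φ (φ u)| ≤ e/3 := by rw [abs_sub_comm]; exact hΦclose.le
    have t2 : |(bfun u - b0) * φ u ^ α| ≤ e/3 := by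
      rw [abs_mul, abs_of_pos hφαpos]
      have : |bfun u - b0| * φ u ^ α ≤ e3 * C := by
        apply mul_le_mul hub.le hφαle hφαpos.le he3pos.le
      apply this.trans
      rw [he3def]
      rw [div_mul_eq_mul_div, div_le_div_iff₀ (by positivity) (by norm_num : (0:ℝ) < 3)]
      nlinarith
    have t3 : |l - q u| ≤ e/3 := by rw [abs_sub_comm]; exact huq.le
    calc |(Φ t - Φ (φ u)) + (bfun u - b0) * φ u ^ α + (l - q u)|
        ≤ |(Φ t - Φ (φ u)) + (bfun u - b0) * φ u ^ α| + |l - q u| := abs_add_le _ _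
      _ ≤ |Φ t - Φ (φ u)| + |(bfun u - b0) * φ u ^ α| + |l - q u| := by
          linarith [abs_add_le (Φ t - Φ (φ u)) ((bfun u - b0) * φ u ^ α)]
      _ ≤ e := by linarith
  -- sign extraction: positive case
  have key_pos : ∀ t : ℝ, 0 < t → 0 < t ^ (α+1) - b0 * t ^ α + l →
      ∃ ε : ℝ, 0 < ε ∧ ∃ ε₂ : ℝ, 0 < ε₂ ∧ ∃ δ' : ℝ, 0 < δ' ∧ δ' ≤ 1 ∧
        ∀ u ∈ Ioo (0:ℝ) δ', |φ u - t| ≤ ε → Dφ u ≤ -ε₂ / u := by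
    intro t ht hpos
    obtain ⟨e0, he0def⟩ : ∃ e0 : ℝ, e0 = t ^ (α+1) - b0 * t ^ α + l := ⟨_, rfl⟩
    have he0pos : 0 < e0 := by rw [he0def]; linarith
    obtain ⟨ε, hε, δ', hδ', hle1, hprop⟩ := approx t ht (e0/2) (by linarith)
    have hCpos : (0:ℝ) < (2*t) ^ α := Real.rpow_pos_of_pos (by linarith) α
    refine ⟨ε, hε, (e0/2)/((2*t) ^ α), by positivity, δ', hδ', hle1, ?_⟩
    intro u hu hband
    obtain ⟨hu1, hφp, hφle2t, habs⟩ := hprop u hu hband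
    have hu0 : 0 < u := hu.1
    have hφαpos : (0:ℝ) < φ u ^ α := Real.rpow_pos_of_pos hφp α
    have hφαle : φ u ^ α ≤ (2*t) ^ α := Real.rpow_le_rpow hφp.le hφle2t hα.le
    rw [abs_le] at habs
    have h1 : u * φ u ^ α * Dφ u ≤ -(e0/2) := by linarith [habs.2, he0def]
    have hXneg : Dφ u < 0 := by nlinarith [mul_pos hu0 hφαpos]
    rw [neg_div, div_div, ← neg_div, le_div_iff₀ (by positivity : (0:ℝ) < (2*t) ^ α * u)]
    nlinarith [mul_le_mul_of_nonpos_left hφαle hXneg.le]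
  -- sign extraction: negative case
  have key_neg : ∀ t : ℝ, 0 < t → t ^ (α+1) - b0 * t ^ α + l < 0 →
      ∃ ε : ℝ, 0 < ε ∧ ∃ ε₂ : ℝ, 0 < ε₂ ∧ ∃ δ' : ℝ, 0 < δ' ∧ δ' ≤ 1 ∧
        ∀ u ∈ Ioo (0:ℝ) δ', |φ u - t| ≤ ε → ε₂ / u ≤ Dφ u := by
    intro t ht hneg
    obtain ⟨e0, he0def⟩ : ∃ e0 : ℝ, e0 = -(t ^ (α+1) - b0 * t ^ α + l) := ⟨_, rfl⟩
    have he0pos : 0 < e0 := by rw [he0def]; linarith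
    obtain ⟨ε, hε, δ', hδ', hle1, hprop⟩ := approx t ht (e0/2) (by linarith)
    have hCpos : (0:ℝ) < (2*t) ^ α := Real.rpow_pos_of_pos (by linarith) α
    refine ⟨ε, hε, (e0/2)/((2*t) ^ α), by positivity, δ', hδ', hle1, ?_⟩
    intro u hu hband
    obtain ⟨hu1, hφp, hφle2t, habs⟩ := hprop u hu hband
    have hu0 : 0 < u := hu.1
    have hφαpos : (0:ℝ) < φ u ^ α := Real.rpow_pos_of_pos hφp α
    have hφαle : φ u ^ α ≤ (2*t) ^ α := Real.rpow_le_rpow hφp.le hφle2t hα.le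
    rw [abs_le] at habs
    have h1 : e0/2 ≤ u * φ u ^ α * Dφ u := by linarith [habs.1, he0def]
    have hXpos : 0 < Dφ u := by nlinarith [mul_pos hu0 hφαpos]
    rw [div_div, div_le_iff₀ (by positivity : (0:ℝ) < (2*t) ^ α * u)]
    nlinarith [mul_le_mul_of_nonneg_left hφαle hXpos.le]
  -- liminf / limsup machinery
  haveI hFne : F.NeBot := by rw [hF]; infer_instance
  have hbdd_above : IsBoundedUnder (· ≤ ·) F φ :=
    ⟨b0 + 1, by simpa [eventually_map] using hφle 1 one_pos⟩
  have hbdd_below : IsBoundedUnder (· ≥ ·) F φ :=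
    ⟨0, by simpa [eventually_map] using hφpos.mono (fun u h => h.le)⟩
  have hcob_ge : IsCoboundedUnder (· ≥ ·) F φ := hbdd_above.isCoboundedUnder_ge
  have hcob_le : IsCoboundedUnder (· ≤ ·) F φ := hbdd_below.isCoboundedUnder_le
  set m := liminf φ F with hmdef
  set L := limsup φ F with hLdef
  have hm0 : 0 ≤ m := le_liminf_of_le hcob_ge (hφpos.mono fun u h => h.le)
  have hmL : m ≤ L := liminf_le_limsup hbdd_above hbdd_below
  have hfreq_lt : ∀ t : ℝ, m < t → ∃ᶠ u in F, φ u < t := by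
    intro t htm
    by_contra hc
    rw [not_frequently] at hc
    have h1 : ∀ᶠ u in F, t ≤ φ u := hc.mono (fun u h => not_lt.1 h)
    have h2 : t ≤ m := le_liminf_of_le hcob_ge h1
    linarith
  have hfreq_gt : ∀ t : ℝ, t < L → ∃ᶠ u in F, t < φ u := by
    intro t htL
    by_contra hc
    rw [not_frequently] at hc
    have h1 : ∀ᶠ u in F, φ u ≤ t := hc.mono (fun u h => not_lt.1 h)
    have h2 : L ≤ t := limsup_le_of_le hcob_le h1
    linarith
  -- every value strictly between m and L is a root
  have hroot : ∀ t : ℝ, m < t → t < L → t ^ (α+1) - b0 * t ^ α + l = 0 := by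
    intro t h1 h2
    have ht : 0 < t := lt_of_le_of_lt hm0 h1
    by_contra hne
    rcases lt_or_gt_of_ne hne with hlt | hgt
    · -- negative: Dφ ≥ ε₂/u near t, use crossing on -φ
      obtain ⟨ε, hε, ε₂, hε₂, δ', hδ', hle1, hkey⟩ := key_neg t ht hlt
      refine no_up_crossing (fun u => -φ u) (fun u => -Dφ u) (t := -t) hδ' hε
        (fun u hu => (hφder u ⟨hu.1, lt_of_lt_of_le hu.2 hle1⟩).neg) ?_ ?_ ?_
      · intro u hu hband
        have hband' : |φ u - t| ≤ ε := by
          rw [show -φ u - -t = -(φ u - t) by ring, abs_neg] at hband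
          exact hband
        have := hkey u hu hband'
        have hpos : 0 < ε₂ / u := div_pos hε₂ hu.1
        show -Dφ u < 0
        linarith
      · exact (hfreq_gt t h2).mono (fun u h => by show -φ u < -t; linarith)
      · exact (hfreq_lt t h1).mono (fun u h => by show -φ u > -t; linarith)
    · -- positive: Dφ ≤ -ε₂/u near t, crossing on φ
      obtain ⟨ε, hε, ε₂, hε₂, δ', hδ', hle1, hkey⟩ := key_pos t ht hgt
      refine no_up_crossing φ Dφ (t := t) hδ' hε
        (fun u hu => hφder u ⟨hu.1, lt_of_lt_of_le hu.2 hle1⟩) ?_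
        (hfreq_lt t h1) (hfreq_gt t h2)
      intro u hu hband
      have := hkey u hu hband
      have hpos : 0 < ε₂ / u := div_pos hε₂ hu.1
      rw [neg_div] at this
      linarith
  -- m = L via Rolle
  have hcrit : ∀ x : ℝ, 0 < x → deriv (fun s => b0 * s ^ α - s ^ (α+1)) x = 0 →
      (α+1) * x = α * b0 := by
    intro x hx hdx
    have hd : HasDerivAt (fun s : ℝ => b0 * s ^ α - s ^ (α+1))
        (b0 * (α * x ^ (α-1)) - (α+1) * x ^ (α+1-1)) x :=
      ((Real.hasDerivAt_rpow_const (Or.inl (ne_of_gt hx))).const_mul b0).sub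
        (Real.hasDerivAt_rpow_const (Or.inl (ne_of_gt hx)))
    rw [hd.deriv] at hdx
    rw [show α + 1 - 1 = α by ring] at hdx
    have hxα : x ^ α = x ^ (α-1) * x := by
      conv_lhs => rw [show α = α - 1 + 1 by ring, Real.rpow_add_one (ne_of_gt hx)]
    rw [hxα] at hdx
    have hfac : x ^ (α-1) * (b0 * α - (α+1) * x) = 0 := by linear_combination hdx
    rcases mul_eq_zero.1 hfac with hc | hc
    · exact absurd hc (Real.rpow_pos_of_pos hx _).ne'
    · linarith
  have hml_eq : m = L := by
    by_contra hne
    have hmL' : m < L := lt_of_le_of_ne hmL hne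
    set t1 := m + (L - m)/4 with ht1
    set t2 := m + (L - m)/2 with ht2
    set t3 := m + 3*(L - m)/4 with ht3
    have ht1m : m < t1 := by rw [ht1]; linarith
    have ht12 : t1 < t2 := by rw [ht1, ht2]; linarith
    have ht23 : t2 < t3 := by rw [ht2, ht3]; linarith
    have ht3L : t3 < L := by rw [ht3]; linarith
    have ht1p : 0 < t1 := lt_of_le_of_lt hm0 ht1m
    have hψ : ∀ t : ℝ, m < t → t < L → b0 * t ^ α - t ^ (α+1) = l := by
      intro t ha hb
      have := hroot t ha hb
      linarith
    have hcontψ : ∀ a b : ℝ, 0 < a → ContinuousOn (fun s : ℝ => b0 * s ^ α - s ^ (α+1)) (Icc a b) := by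
      intro a b ha
      intro x hx
      have hxp : 0 < x := lt_of_lt_of_le ha hx.1
      exact ((continuousAt_const.mul (Real.continuousAt_rpow_const x α (Or.inl hxp.ne'))).sub
        (Real.continuousAt_rpow_const x (α+1) (Or.inl hxp.ne'))).continuousWithinAt
    obtain ⟨c1, hc1, hdc1⟩ := exists_deriv_eq_zero ht12 (hcontψ t1 t2 ht1p)
      (by rw [hψ t1 ht1m (by linarith), hψ t2 (by linarith) (by linarith)])
    obtain ⟨c2, hc2, hdc2⟩ := exists_deriv_eq_zero ht23 (hcontψ t2 t3 (by linarith))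
      (by rw [hψ t2 (by linarith) (by linarith), hψ t3 (by linarith) ht3L])
    have e1 := hcrit c1 (by linarith [hc1.1]) hdc1
    have e2 := hcrit c2 (by linarith [hc2.1]) hdc2
    have : c1 < c2 := lt_trans hc1.2 hc2.1
    nlinarith
  -- the limit exists
  have htend : Tendsto φ F (𝓝 L) := tendsto_of_liminf_eq_limsup hml_eq rfl hbdd_above hbdd_below
  have hlam0 : 0 ≤ L := hml_eq ▸ hm0
  -- the limit satisfies the equation
  have hfinal : L ^ (α+1) - b0 * L ^ α + l = 0 := by
    rcases eq_or_lt_of_le hlam0 with h0 | hpos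
    · -- L = 0 forces l = 0
      have hl0' : l = 0 := by
        by_contra hlne
        have hlpos : 0 < l := lt_of_le_of_ne hl0 (Ne.symm hlne)
        apply hblowup
        have hφto0 : Tendsto φ F (𝓝 0) := by rw [h0]; exact htend
        have hφαto : Tendsto (fun u => φ u ^ α) F (𝓝[>] (0:ℝ)) := by
          rw [tendsto_nhdsWithin_iff]
          constructor
          · have hcont : ContinuousAt (fun s : ℝ => s ^ α) 0 :=
              Real.continuousAt_rpow_const 0 α (Or.inr hα.le)
            have h2 := hcont.tendsto.comp hφto0
            rw [Real.zero_rpow (ne_of_gt hα)] at h2; exact h2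
          · filter_upwards [hφpos] with u hu
            exact Real.rpow_pos_of_pos hu α
        have hinv : Tendsto (fun u => (φ u ^ α)⁻¹) F atTop := tendsto_inv_nhdsGT_zero.comp hφαto
        have hmul : Tendsto (fun u => q u * (φ u ^ α)⁻¹) F atTop :=
          Tendsto.pos_mul_atTop hlpos hql hinv
        apply hmul.congr'
        filter_upwards [hIoo1] with u hu
        rw [← div_eq_mul_inv, ← hratio u hu]
      rw [← h0, hl0', Real.zero_rpow (by linarith : α + 1 ≠ 0), Real.zero_rpow (ne_of_gt hα)]
      ring
    · by_contra hne
      rcases lt_or_gt_of_ne hne with hlt | hgt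
      · -- η(L) < 0 : Dφ ≥ ε₂/u, contradiction via log growth on -φ
        obtain ⟨ε, hε, ε₂, hε₂, δ', hδ', hle1, hkey⟩ := key_neg L hpos hlt
        have hband : ∀ᶠ u in F, |φ u - L| ≤ ε := by
          have h2 := Metric.tendsto_nhds.1 htend ε hε
          refine h2.mono (fun u hu => ?_)
          rw [Real.dist_eq] at hu; exact hu.le
        obtain ⟨δ₂, hδ₂pos, hδ₂sub⟩ := mem_nhdsGT_iff_exists_Ioo_subset.1 hband
        have hδ₂pos' : (0:ℝ) < δ₂ := hδ₂pos
        refine no_log_decay (fun u => -φ u) (fun u => -Dφ u)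
          (δ := min δ' δ₂) (ε := ε₂) (C := |L| + ε) (lt_min hδ' hδ₂pos') hε₂ ?_ ?_ ?_
        · intro u hu
          exact (hφder u ⟨hu.1, lt_of_lt_of_le hu.2 ((min_le_left _ _).trans hle1)⟩).neg
        · intro u hu
          have hb := hδ₂sub ⟨hu.1, lt_of_lt_of_le hu.2 (min_le_right _ _)⟩
          have h3 := hkey u ⟨hu.1, lt_of_lt_of_le hu.2 (min_le_left _ _)⟩ hb
          show -Dφ u ≤ -ε₂ / u
          rw [neg_div]
          linarith
        · intro u hu
          have hb := hδ₂sub ⟨hu.1, lt_of_lt_of_le hu.2 (min_le_right _ _)⟩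
          show |-φ u| ≤ |L| + ε
          rw [abs_neg]
          have h3 := abs_add_le (φ u - L) L
          rw [sub_add_cancel] at h3
          have hb' : |φ u - L| ≤ ε := hb
          linarith
      · -- η(L) > 0 : Dφ ≤ -ε₂/u, contradiction via log growth on φ
        obtain ⟨ε, hε, ε₂, hε₂, δ', hδ', hle1, hkey⟩ := key_pos L hpos hgt
        have hband : ∀ᶠ u in F, |φ u - L| ≤ ε := by
          have h2 := Metric.tendsto_nhds.1 htend ε hε
          refine h2.mono (fun u hu => ?_)
          rw [Real.dist_eq] at hu; exact hu.le
        obtain ⟨δ₂, hδ₂pos, hδ₂sub⟩ := mem_nhdsGT_iff_exists_Ioo_subset.1 hband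
        have hδ₂pos' : (0:ℝ) < δ₂ := hδ₂pos
        refine no_log_decay φ Dφ
          (δ := min δ' δ₂) (ε := ε₂) (C := |L| + ε) (lt_min hδ' hδ₂pos') hε₂ ?_ ?_ ?_
        · intro u hu
          exact hφder u ⟨hu.1, lt_of_lt_of_le hu.2 ((min_le_left _ _).trans hle1)⟩
        · intro u hu
          have hb := hδ₂sub ⟨hu.1, lt_of_lt_of_le hu.2 (min_le_right _ _)⟩
          exact hkey u ⟨hu.1, lt_of_lt_of_le hu.2 (min_le_left _ _)⟩ hb
        · intro u hu
          have hb := hδ₂sub ⟨hu.1, lt_of_lt_of_le hu.2 (min_le_right _ _)⟩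
          have h3 := abs_add_le (φ u - L) L
          rw [sub_add_cancel] at h3
          have hb' : |φ u - L| ≤ ε := hb
          linarith
  exact ⟨l, L, hl0, hql, hlam0, htend, by linarith [hfinal]⟩
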